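/- (Optimality of the Sinkhorn scaling form for entropy-regularized KPG-RL.) Let p ∈ Σ_m, q ∈ Σ_n, M ∈ {0,1}^{m×n} a mask matrix, G ∈ ℝ^{m×n}, and ε > 0. Define K̂ ∈ ℝ_{≥0}^{m×n} by K̂_{i,j} = M_{i,j} e^{−G_{i,j}/ε}. Suppose there exist vectors u ∈ ℝ_{>0}^m and v ∈ ℝ_{>0}^n such that the matrix π* = diag(u) K̂ diag(v) satisfies π* 1_n = p and (π*)^T 1_m = q. Then M⊙π* = π*, π* ∈ Π(p,q;M), and π* minimizes the entropy-regularized objective ⟨M⊙π, G⟩_F − ε H(M⊙π) over all π ∈ Π(p,q;M), where H(T) = −Σ_{i,j}(T_{i,j} log T_{i,j} − T_{i,j}) with the convention 0·log 0 = 0, and ⟨·,·⟩_F is the Frobenius inner product. -/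
import Mathlib

open Finset

noncomputable section

variable {m n : ℕ}

/-- The masked feasible set `Π(p, q; M)`. -/
def PiM (M : Matrix (Fin m) (Fin n) ℝ) (p : Fin m → ℝ) (q : Fin n → ℝ) :
    Set (Matrix (Fin m) (Fin n) ℝ) :=
  {π | (∀ i j, 0 ≤ π i j) ∧ (∀ i, ∑ j, M i j * π i j = p i) ∧
    (∀ j, ∑ i, M i j * π i j = q j)}

/-- The entropy-regularized KPG-RL objective `⟨M ⊙ π, G⟩_F − ε H(M ⊙ π)`, with
`H(T) = −Σ_{i,j} (T_{i,j} log T_{i,j} − T_{i,j})` (and `0 · log 0 = 0`, which is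
`Real.log 0 = 0` in Lean). -/
def entObj (M G : Matrix (Fin m) (Fin n) ℝ) (ε : ℝ)
    (π : Matrix (Fin m) (Fin n) ℝ) : ℝ :=
  ∑ i, ∑ j, M i j * π i j * G i j
    + ε * ∑ i, ∑ j,
        (M i j * π i j * Real.log (M i j * π i j) - M i j * π i j)

lemma pointwise_ineq (ε a b t g : ℝ) (hε : 0 < ε) (ha : 0 < a) (hb : 0 < b)
    (ht : 0 ≤ t) :
    a * Real.exp (-g / ε) * b * g
      + ε * (a * Real.exp (-g / ε) * b * Real.log (a * Real.exp (-g / ε) * b)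
          - a * Real.exp (-g / ε) * b)
      + ε * ((Real.log a + Real.log b) * (t - a * Real.exp (-g / ε) * b))
      ≤ t * g + ε * (t * Real.log t - t) := by
  set s := a * Real.exp (-g / ε) * b with hs
  have hsp : 0 < s := by positivity
  have hlog : Real.log s = Real.log a + Real.log b - g / ε := by
    rw [hs, Real.log_mul (by positivity) hb.ne', Real.log_mul ha.ne' (Real.exp_pos _).ne',
      Real.log_exp]
    ring
  have haux : t * Real.log s - s ≤ t * Real.log t - t := by
    rcases eq_or_lt_of_le ht with h | h
    · simp [← h]; linarith
    · have h1 := Real.log_le_sub_one_of_pos (show (0:ℝ) < s / t by positivity)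
      rw [Real.log_div hsp.ne' h.ne'] at h1
      have h2 := mul_le_mul_of_nonneg_left h1 h.le
      have h3 : t * (s / t) = s := by field_simp
      nlinarith
  have hg : g = ε * (Real.log a + Real.log b) - ε * Real.log s := by
    rw [hlog]; field_simp; ring
  rw [hg]
  nlinarith [mul_le_mul_of_nonneg_left haux hε.le]

/-- Optimality of the Sinkhorn scaling form for entropy-regularized
KPG-RL: if `π* = diag(u) K̂ diag(v)` with `u, v > 0` and
`K̂_{i,j} = M_{i,j} e^{−G_{i,j}/ε}` has marginals `p` and `q`, then `M ⊙ π* = π*`,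
`π* ∈ Π(p,q;M)`, and `π*` minimizes the entropy-regularized objective over
`Π(p,q;M)`. -/
theorem sinkhorn_form_optimal
    (p : Fin m → ℝ) (q : Fin n → ℝ)
    (M G : Matrix (Fin m) (Fin n) ℝ) (ε : ℝ)
    (hps : p ∈ stdSimplex ℝ (Fin m)) (hqs : q ∈ stdSimplex ℝ (Fin n))
    (hM : ∀ i j, M i j = 0 ∨ M i j = 1) (hε : 0 < ε)
    (u : Fin m → ℝ) (v : Fin n → ℝ)
    (hu : ∀ i, 0 < u i) (hv : ∀ j, 0 < v j)
    (hrow : ∀ i, ∑ j, u i * (M i j * Real.exp (-(G i j) / ε)) * v j = p i)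
    (hcol : ∀ j, ∑ i, u i * (M i j * Real.exp (-(G i j) / ε)) * v j = q j) :
    (∀ i j, M i j * (u i * (M i j * Real.exp (-(G i j) / ε)) * v j)
        = u i * (M i j * Real.exp (-(G i j) / ε)) * v j)
    ∧ (fun i j => u i * (M i j * Real.exp (-(G i j) / ε)) * v j) ∈ PiM M p q
    ∧ ∀ π ∈ PiM M p q,
        entObj M G ε (fun i j => u i * (M i j * Real.exp (-(G i j) / ε)) * v j)
          ≤ entObj M G ε π := by
  set S : Matrix (Fin m) (Fin n) ℝ :=
    fun i j => u i * (M i j * Real.exp (-(G i j) / ε)) * v j with hS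
  have habs : ∀ i j, M i j * S i j = S i j := by
    intro i j
    rcases hM i j with h | h <;> simp [hS, h]
  refine ⟨habs, ⟨?_, ?_, ?_⟩, ?_⟩
  · intro i j
    rcases hM i j with h | h
    · simp [hS, h]
    · simp only [hS, h, one_mul]
      exact le_of_lt (mul_pos (mul_pos (hu i) (Real.exp_pos _)) (hv j))
  · intro i
    simp only [habs]
    exact hrow i
  · intro j
    simp only [habs]
    exact hcol j
  · intro π hπ
    obtain ⟨hπ0, hπr, hπc⟩ := hπ
    -- pointwise convexity inequality
    have key : ∀ i j,
        M i j * S i j * G i j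
          + ε * (M i j * S i j * Real.log (M i j * S i j) - M i j * S i j)
          + ε * ((Real.log (u i) + Real.log (v j)) * (M i j * π i j - M i j * S i j))
        ≤ M i j * π i j * G i j
          + ε * (M i j * π i j * Real.log (M i j * π i j) - M i j * π i j) := by
      intro i j
      rcases hM i j with h | h
      · simp [hS, h]
      · have := pointwise_ineq ε (u i) (v j) (π i j) (G i j) hε (hu i) (hv j) (hπ0 i j)
        simp only [hS, h, one_mul] at this ⊢
        linarith
    -- the correction term sums to zero
    have hDrow : ∀ i, ∑ j, (M i j * π i j - M i j * S i j) = 0 := by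
      intro i
      rw [Finset.sum_sub_distrib, hπr i]
      simp only [habs]
      rw [hrow i]
      ring
    have hDcol : ∀ j, ∑ i, (M i j * π i j - M i j * S i j) = 0 := by
      intro j
      rw [Finset.sum_sub_distrib, hπc j]
      simp only [habs]
      rw [hcol j]
      ring
    have hzero : ∑ i, ∑ j,
        (Real.log (u i) + Real.log (v j)) * (M i j * π i j - M i j * S i j) = 0 := by
      have A : ∑ i, ∑ j, Real.log (u i) * (M i j * π i j - M i j * S i j) = 0 := by
        refine Finset.sum_eq_zero fun i _ => ?_
        rw [← Finset.mul_sum, hDrow i, mul_zero]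
      have B : ∑ i, ∑ j, Real.log (v j) * (M i j * π i j - M i j * S i j) = 0 := by
        rw [Finset.sum_comm]
        refine Finset.sum_eq_zero fun j _ => ?_
        rw [← Finset.mul_sum, hDcol j, mul_zero]
      simp_rw [add_mul, Finset.sum_add_distrib]
      rw [A, B, add_zero]
    have Z0 : (∑ i, ∑ j,
        ε * ((Real.log (u i) + Real.log (v j)) * (M i j * π i j - M i j * S i j))) = 0 := by
      simp_rw [← Finset.mul_sum]
      rw [hzero, mul_zero]
    have hsum := Finset.sum_le_sum fun i (_ : i ∈ Finset.univ) =>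
      Finset.sum_le_sum fun j (_ : j ∈ Finset.univ) => key i j
    simp_rw [Finset.sum_add_distrib] at hsum
    rw [Z0, add_zero] at hsum
    unfold entObj
    simp_rw [Finset.mul_sum]
    exact hsum
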